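/- The 5-dimensional nilpotent commutative associative algebra A₀₄ degenerates to A₀₈: the structure λ of A₀₈ lies in the closure of the GL(5,ℂ)-orbit O(μ) of the structure μ of A₀₄ (closure in the standard topology on the space of bilinear maps ℂ⁵ × ℂ⁵ → ℂ⁵). -/

import Mathlib

open ContinuousLinearMap

/-- The underlying space `ℂⁿ`. -/
abbrev Vn (n : ℕ) := Fin n → ℂ

/-- The space of bilinear maps `ℂⁿ × ℂⁿ → ℂⁿ` (as continuous linear maps in two
arguments), carrying its standard topology as a finite-dimensional complex vector space. -/
abbrev Bil (n : ℕ) := Vn n →L[ℂ] Vn n →L[ℂ] Vn n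

/-- The action of `GL(n, ℂ)` on bilinear maps: `(g · μ)(x, y) = g (μ (g⁻¹ x) (g⁻¹ y))`. -/
noncomputable def act {n : ℕ} (g : Vn n ≃L[ℂ] Vn n) (μ : Bil n) : Bil n :=
  ((compL ℂ (Vn n) (Vn n) (Vn n)).flip (g.symm : Vn n →L[ℂ] Vn n)).comp
    (((compL ℂ (Vn n) (Vn n) (Vn n)) (g : Vn n →L[ℂ] Vn n)).comp
      (μ.comp (g.symm : Vn n →L[ℂ] Vn n)))

@[simp] lemma act_apply {n : ℕ} (g : Vn n ≃L[ℂ] Vn n) (μ : Bil n) (x y : Vn n) :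
    act g μ x y = g (μ (g.symm x) (g.symm y)) := rfl

/-- The orbit `O(μ)` of a bilinear map under the `GL(n, ℂ)`-action. -/
noncomputable def orbit {n : ℕ} (μ : Bil n) : Set (Bil n) :=
  {ν | ∃ g : Vn n ≃L[ℂ] Vn n, ν = act g μ}

/-- The standard basis `e₁, …, e₅` of `ℂ⁵` (zero-indexed: `e i` is `e_{i+1}`). -/
def e (i : Fin 5) : Vn 5 := Pi.single i 1

/-- Multiplication table of the algebra `𝐀04` (entry `(i, j)` is `eᵢ · eⱼ`). -/
def tblA04 : Fin 5 → Fin 5 → Vn 5 :=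
  ![![e 2, e 3, 0, e 4, 0],
   ![e 3, 0, e 4, 0, 0],
   ![0, e 4, 0, 0, 0],
   ![e 4, 0, 0, 0, 0],
   ![0, 0, 0, 0, 0]]

/-- Multiplication table of the algebra `𝐀08` (entry `(i, j)` is `eᵢ · eⱼ`). -/
def tblA08 : Fin 5 → Fin 5 → Vn 5 :=
  ![![e 2, e 4, e 3, 0, 0],
   ![e 4, e 3, 0, 0, 0],
   ![e 3, 0, 0, 0, 0],
   ![0, 0, 0, 0, 0],
   ![0, 0, 0, 0, 0]]

/-! ### Auxiliary material for the degeneration -/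

lemma single_eq' (x : Vn 5) (k : Fin 5) : Pi.single k (x k) = x k • e k := by
  funext m
  by_cases h : m = k <;> simp [e, Pi.single_apply, h]

lemma clm_apply_eq' {M : Type*} [AddCommGroup M] [Module ℂ M] [TopologicalSpace M]
    [IsTopologicalAddGroup M] [ContinuousSMul ℂ M]
    (A : Vn 5 →L[ℂ] M) (x : Vn 5) : A x = ∑ k : Fin 5, x k • A (e k) := by
  conv_lhs => rw [← Finset.univ_sum_single x]
  rw [map_sum]
  exact Finset.sum_congr rfl fun k _ => by rw [single_eq', map_smul]

lemma bil_apply' (A : Bil 5) (x y : Vn 5) :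
    A x y = ∑ k : Fin 5, ∑ l : Fin 5, (x k * y l) • A (e k) (e l) := by
  rw [clm_apply_eq' A x, ContinuousLinearMap.sum_apply]
  refine Finset.sum_congr rfl fun k _ => ?_
  rw [ContinuousLinearMap.smul_apply, clm_apply_eq' (A (e k)) y, Finset.smul_sum]
  exact Finset.sum_congr rfl fun l _ => by rw [smul_smul]

lemma bil_ext' {A B : Bil 5} (h : ∀ i j, A (e i) (e j) = B (e i) (e j)) : A = B := by
  refine ContinuousLinearMap.ext fun x => ContinuousLinearMap.ext fun y => ?_
  rw [bil_apply' A, bil_apply' B]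
  simp only [h]

/-- The matrix whose columns are the degenerating basis `f₁(t), …, f₅(t)`. -/
noncomputable def Fm (t : ℂ) : Matrix (Fin 5) (Fin 5) ℂ :=
  !![1, 0, 0, 0, 0;
     t, t^2, 0, 0, 0;
     0, 3/(2*t), 1, 0, 0;
     0, 0, 2*t, 0, t^2;
     0, 0, 0, 3*t, 3/2]

/-- The inverse of `Fm t` (for `t ≠ 0`). -/
noncomputable def Gm (t : ℂ) : Matrix (Fin 5) (Fin 5) ℂ :=
  !![1, 0, 0, 0, 0;
     -1/t, 1/t^2, 0, 0, 0;
     3/(2*t^2), -3/(2*t^3), 1, 0, 0;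
     3/(2*t^4), -3/(2*t^5), 1/t^2, -1/(2*t^3), 1/(3*t);
     -3/t^3, 3/t^4, -2/t, 1/t^2, 0]

lemma hFG (t : ℂ) (ht : t ≠ 0) : Fm t * Gm t = 1 := by
  ext i j
  fin_cases i <;> fin_cases j <;>
    simp [Fm, Gm, Matrix.mul_apply, Fin.sum_univ_five, Matrix.one_apply,
      Matrix.vecHead, Matrix.vecTail] <;>
    field_simp <;> ring

lemma hGF (t : ℂ) (ht : t ≠ 0) : Gm t * Fm t = 1 := by
  ext i j
  fin_cases i <;> fin_cases j <;>
    simp [Fm, Gm, Matrix.mul_apply, Fin.sum_univ_five, Matrix.one_apply,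
      Matrix.vecHead, Matrix.vecTail] <;>
    field_simp <;> ring

/-- The degenerating basis as explicit combinations of the `e i`. -/
noncomputable def fvec (t : ℂ) : Fin 5 → Vn 5 :=
  ![e 0 + t • e 1,
    t^2 • e 1 + (3/(2*t)) • e 2,
    e 2 + (2*t) • e 3,
    (3*t) • e 4,
    t^2 • e 3 + (3/2 : ℂ) • e 4]

/-- Images of the `e i` under `Gm t` as explicit combinations. -/
noncomputable def gvec (t : ℂ) : Fin 5 → Vn 5 :=
  ![e 0 - (1/t) • e 1 + (3/(2*t^2)) • e 2 + (3/(2*t^4)) • e 3 - (3/t^3) • e 4,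
    (1/t^2) • e 1 - (3/(2*t^3)) • e 2 - (3/(2*t^5)) • e 3 + (3/t^4) • e 4,
    e 2 + (1/t^2) • e 3 - (2/t) • e 4,
    -(1/(2*t^3)) • e 3 + (1/t^2) • e 4,
    (1/(3*t)) • e 3]

lemma Fm_col (t : ℂ) (i : Fin 5) : (Fm t).mulVec (e i) = fvec t i := by
  fin_cases i <;> funext m <;> fin_cases m <;>
    simp [Fm, fvec, e, Matrix.mulVec, dotProduct, Fin.sum_univ_five,
      Pi.single_apply, Matrix.vecHead, Matrix.vecTail]

lemma Gm_col (t : ℂ) (k : Fin 5) : (Gm t).mulVec (e k) = gvec t k := by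
  fin_cases k <;> funext m <;> fin_cases m <;>
    simp [Gm, gvec, e, Matrix.mulVec, dotProduct, Fin.sum_univ_five,
      Pi.single_apply, Matrix.vecHead, Matrix.vecTail] <;>
    ring

/-- The perturbation bilinear map `ρ`. -/
noncomputable def rbil : Bil 5 :=
  (proj (1 : Fin 5)).smulRight ((proj (2 : Fin 5)).smulRight (e 3)) +
  (proj (2 : Fin 5)).smulRight ((proj (1 : Fin 5)).smulRight (e 3)) +
  (proj (0 : Fin 5)).smulRight ((proj (4 : Fin 5)).smulRight (e 3)) +
  (proj (4 : Fin 5)).smulRight ((proj (0 : Fin 5)).smulRight (e 3))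

lemma rbil_apply (x y : Vn 5) :
    rbil x y = (x 1 * y 2 + x 2 * y 1 + x 0 * y 4 + x 4 * y 0) • e 3 := by
  simp only [rbil, ContinuousLinearMap.add_apply, ContinuousLinearMap.smulRight_apply,
    ContinuousLinearMap.proj_apply, ContinuousLinearMap.smul_apply, add_smul, smul_smul]

/-- Coefficients of `ρ` on the basis. -/
noncomputable def rcoef : Fin 5 → Fin 5 → ℂ :=
  ![![0,0,0,0,1],![0,0,1,0,0],![0,1,0,0,0],![0,0,0,0,0],![1,0,0,0,0]]

lemma rbil_e (i j : Fin 5) : rbil (e i) (e j) = rcoef i j • e 3 := by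
  fin_cases i <;> fin_cases j <;>
    simp [rbil_apply, e, Pi.single_apply, rcoef, Matrix.vecHead, Matrix.vecTail]

set_option maxHeartbeats 1000000 in
/-- The key entrywise computation. -/
lemma key_entry (t : ℂ) (ht : t ≠ 0) (μ : Bil 5) (G : Vn 5 →ₗ[ℂ] Vn 5)
    (hμ : ∀ i j : Fin 5, μ (e i) (e j) = tblA04 i j)
    (hG : ∀ k : Fin 5, G (e k) = gvec t k) (i j : Fin 5) :
    G (μ (fvec t i) (fvec t j)) = tblA08 i j + ((t/3) * rcoef i j) • e 3 := by
  fin_cases i <;> fin_cases j <;>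
    simp [fvec, tblA04, tblA08, rcoef, map_add, map_smul, hμ, hG, gvec,
      ContinuousLinearMap.add_apply, ContinuousLinearMap.smul_apply,
      Matrix.vecHead, Matrix.vecTail] <;>
    match_scalars <;> field_simp <;> ring

set_option maxHeartbeats 1000000 in
set_option synthInstance.maxHeartbeats 1000000 in
/-- The $5$-dimensional nilpotent commutative associative algebra `𝐀04` degenerates to
`𝐀08`: the structure `λ` of `𝐀08` lies in the closure of
the `GL(5, ℂ)`-orbit `O(μ)` of the structure `μ` of `𝐀04`. -/
theorem A04_deg_A08 (μ lam : Bil 5)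
    (hμ : ∀ i j : Fin 5, μ (e i) (e j) = tblA04 i j)
    (hlam : ∀ i j : Fin 5, lam (e i) (e j) = tblA08 i j) :
    lam ∈ closure (orbit μ) := by
  have key : ∀ t : ℂ, t ≠ 0 → lam + (t/3) • rbil ∈ orbit μ := by
    intro t ht
    let L : Vn 5 ≃ₗ[ℂ] Vn 5 :=
      LinearEquiv.ofLinear (Gm t).mulVecLin (Fm t).mulVecLin
        (by rw [← Matrix.mulVecLin_mul, hGF t ht, Matrix.mulVecLin_one])
        (by rw [← Matrix.mulVecLin_mul, hFG t ht, Matrix.mulVecLin_one])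
    let g : Vn 5 ≃L[ℂ] Vn 5 := L.toContinuousLinearEquiv
    refine ⟨g, (bil_ext' fun i j => ?_).symm⟩
    have hsymm : ∀ x : Vn 5, g.symm x = (Fm t).mulVec x := fun _ => rfl
    have happ : ∀ x : Vn 5, g x = (Gm t).mulVecLin x := fun _ => rfl
    rw [act_apply, hsymm, hsymm, Fm_col, Fm_col, happ,
      key_entry t ht μ ((Gm t).mulVecLin) hμ
        (fun k => by rw [Matrix.mulVecLin_apply, Gm_col]) i j]
    simp only [ContinuousLinearMap.add_apply, ContinuousLinearMap.smul_apply, hlam,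
      rbil_e, smul_smul]
  have hg : IsTopologicalAddGroup (Bil 5) := inferInstance
  have hca : ContinuousAdd (Bil 5) := hg.toContinuousAdd
  have cont : Continuous fun t : ℂ => lam + (t/3) • rbil :=
    by fun_prop
  have htend : Filter.Tendsto (fun t : ℂ => lam + (t/3) • rbil) (nhdsWithin 0 {0}ᶜ)
      (nhds lam) := by
    have h0 := cont.tendsto 0
    have hz : lam + ((0:ℂ)/3) • rbil = lam := by
      refine ContinuousLinearMap.ext fun x => ContinuousLinearMap.ext fun y => ?_
      simp [ContinuousLinearMap.add_apply, ContinuousLinearMap.smul_apply]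
    rw [hz] at h0
    exact h0.mono_left nhdsWithin_le_nhds
  exact mem_closure_of_tendsto htend
    (by filter_upwards [self_mem_nhdsWithin] with t ht using key t ht)
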